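/- arXiv:1503.06175 — 2 statements merged into one kernel-verified Lean document; each statement's English description precedes it below -/
import Mathlib

section
/- (Young's inequality / maximal inequality for abstract Riemann sums) Let Γ : {(s,t) : 0 ≤ s ≤ t ≤ T} → W be a map into a Banach space W, and let ω be a control, θ > 1 a constant, such that for all s ≤ u ≤ t, ‖Γ(s,t) − Γ(s,u) − Γ(u,t)‖ ≤ ω(s,t)^θ. Then the limit of ∑_k Γ(t_k, t_{k+1}) over partitions D of [0,T] as the mesh max_k ω(t_k,t_{k+1}) → 0 exists, and the limit I satisfies ‖I − Γ(0,T)‖ ≤ ζ(θ)·ω(0,T)^θ where ζ is the Riemann zeta function (up to a multiplicative constant 2^θ). -/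
open Finset

private lemma sew_step_mono {α : Type*} [Preorder α] {n : ℕ} {u : ℕ → α} (h : ∀ k, k < n → u k ≤ u (k+1)) :
    ∀ {i j}, i ≤ j → j ≤ n → u i ≤ u j := by
  intro i j hij hjn
  induction j with
  | zero => simp [Nat.le_zero.mp hij]
  | succ j ih =>
    rcases Nat.lt_or_ge i (j+1) with h1 | h1
    · exact le_trans (ih (Nat.lt_succ_iff.mp h1) (by omega)) (h j (by omega))
    · have : i = j+1 := le_antisymm hij h1
      simp [this]

private lemma sew_omega_mono (T : ℝ) (ω : ℝ → ℝ → ℝ)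
    (hnonneg : ∀ s t : ℝ, 0 ≤ s → s ≤ t → t ≤ T → 0 ≤ ω s t)
    (hsuper : ∀ s u t : ℝ, 0 ≤ s → s ≤ u → u ≤ t → t ≤ T → ω s u + ω u t ≤ ω s t)
    {s' s t t' : ℝ} (h0 : 0 ≤ s') (h1 : s' ≤ s) (h2 : s ≤ t) (h3 : t ≤ t') (h4 : t' ≤ T) :
    ω s t ≤ ω s' t' := by
  have a1 := hsuper s' s t' h0 h1 (le_trans h2 h3) h4
  have a2 := hsuper s t t' (le_trans h0 h1) h2 h3 h4
  have b1 := hnonneg s' s h0 h1 (le_trans (le_trans h2 h3) h4)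
  have b2 := hnonneg t t' (le_trans (le_trans h0 h1) h2) h3 h4
  linarith

private lemma sew_twochain (T : ℝ) (ω : ℝ → ℝ → ℝ)
    (hnonneg : ∀ s t : ℝ, 0 ≤ s → s ≤ t → t ≤ T → 0 ≤ ω s t)
    (hdiag : ∀ s : ℝ, ω s s = 0)
    (hsuper : ∀ s u t : ℝ, 0 ≤ s → s ≤ u → u ≤ t → t ≤ T → ω s u + ω u t ≤ ω s t) :
    ∀ (n : ℕ) (u : ℕ → ℝ), 0 ≤ u 0 → (∀ k, k < n+1 → u k ≤ u (k+1)) → u (n+1) ≤ T →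
    ∑ k ∈ range n, ω (u k) (u (k+2)) ≤ ω (u 0) (u n) + ω (u 0) (u (n+1)) := by
  intro n
  induction n with
  | zero =>
    intro u h0 hstep hT
    simp only [range_zero, sum_empty, hdiag]
    have := hnonneg (u 0) (u 1) h0 (hstep 0 (by omega)) hT
    linarith
  | succ n ih =>
    intro u h0 hstep hT
    have hmono : ∀ {i j}, i ≤ j → j ≤ n+2 → u i ≤ u j :=
      fun hij hjn => sew_step_mono hstep hij hjn
    have hun2T : u (n+2) ≤ T := hT
    have h1 : ∑ k ∈ range n, ω (u k) (u (k+2)) ≤ ω (u 0) (u n) + ω (u 0) (u (n+1)) :=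
      ih u h0 (fun k hk => hstep k (by omega)) (le_trans (hmono (by omega) (by omega)) hT)
    rw [Finset.sum_range_succ]
    have h2 : ω (u 0) (u n) + ω (u n) (u (n+2)) ≤ ω (u 0) (u (n+2)) :=
      hsuper (u 0) (u n) (u (n+2)) h0 (hmono (by omega) (by omega)) (hmono (by omega) (by omega)) hT
    have h3 : ω (u 0) (u (n+1)) ≤ ω (u 0) (u (n+2)) := by
      refine sew_omega_mono T ω hnonneg hsuper h0 le_rfl (hmono (by omega) (by omega)) (hmono (by omega) (by omega)) hT
    linarith

private lemma sew_gamma_diag {W : Type*} [NormedAddCommGroup W]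
    (T : ℝ) (ω : ℝ → ℝ → ℝ) (hdiag : ∀ s : ℝ, ω s s = 0)
    (θ : ℝ) (hθ : 1 < θ) (Γ : ℝ → ℝ → W)
    (halmost : ∀ s u t : ℝ, 0 ≤ s → s ≤ u → u ≤ t → t ≤ T →
      ‖Γ s t - Γ s u - Γ u t‖ ≤ ω s t ^ θ)
    {s : ℝ} (h0 : 0 ≤ s) (h1 : s ≤ T) : Γ s s = 0 := by
  have := halmost s s s h0 le_rfl le_rfl h1
  rw [hdiag, Real.zero_rpow (by linarith)] at this
  have : ‖Γ s s‖ ≤ 0 := by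
    have e : Γ s s - Γ s s - Γ s s = -(Γ s s) := by abel
    rw [e, norm_neg] at this; exact this
  simpa using le_antisymm this (norm_nonneg _)

private lemma sew_lemA {W : Type*} [NormedAddCommGroup W]
    (T : ℝ) (ω : ℝ → ℝ → ℝ)
    (hnonneg : ∀ s t : ℝ, 0 ≤ s → s ≤ t → t ≤ T → 0 ≤ ω s t)
    (hdiag : ∀ s : ℝ, ω s s = 0)
    (hsuper : ∀ s u t : ℝ, 0 ≤ s → s ≤ u → u ≤ t → t ≤ T → ω s u + ω u t ≤ ω s t)
    (θ : ℝ) (hθ : 1 < θ) (Γ : ℝ → ℝ → W)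
    (halmost : ∀ s u t : ℝ, 0 ≤ s → s ≤ u → u ≤ t → t ≤ T →
      ‖Γ s t - Γ s u - Γ u t‖ ≤ ω s t ^ θ) :
    ∀ (n : ℕ) (u : ℕ → ℝ) (s t : ℝ), 0 ≤ s → t ≤ T → u 0 = s → u n = t →
      (∀ k, k < n → u k ≤ u (k+1)) →
      ‖(∑ k ∈ range n, Γ (u k) (u (k+1))) - Γ s t‖ ≤
        ∑ m ∈ Finset.Icc 1 (n-1), (2 * ω s t / m) ^ θ := by
  intro n
  induction n using Nat.strong_induction_on with
  | _ n IH =>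
  intro u s t h0s htT hu0 hun hstep
  match n, IH with
  | 0, _ =>
    have hst : s = t := by rw [← hu0, ← hun]
    subst hst
    simp [sew_gamma_diag T ω hdiag θ hθ Γ halmost h0s htT]
  | 1, _ =>
    rw [Finset.sum_range_one, hu0, hun]
    simp
  | (n+2), IH =>
    have hmono : ∀ {i j}, i ≤ j → j ≤ n+2 → u i ≤ u j :=
      fun hij hjn => sew_step_mono hstep hij hjn
    have hst : s ≤ t := by rw [← hu0, ← hun]; exact hmono (by omega) (by omega)
    have hωst : 0 ≤ ω s t := hnonneg s t h0s hst htT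
    have h0u : (0:ℝ) ≤ u 0 := by rw [hu0]; exact h0s
    have huT : u (n+2) ≤ T := by rw [hun]; exact htT
    have hbk : ∀ {i j}, i ≤ j → j ≤ n+2 → 0 ≤ u i ∧ u j ≤ T := by
      intro i j hij hjn
      exact ⟨le_trans h0u (hmono (Nat.zero_le i) (le_trans hij hjn)),
        le_trans (hmono hjn le_rfl) huT⟩
    -- total two-step bound
    have hsum2 : ∑ k ∈ range (n+1), ω (u k) (u (k+2)) ≤ 2 * ω s t := by
      have := sew_twochain T ω hnonneg hdiag hsuper (n+1) u h0u
        (fun k hk => hstep k (by omega)) huT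
      have e1 : ω (u 0) (u (n+1)) ≤ ω s t := by
        rw [← hu0, ← hun]
        exact sew_omega_mono T ω hnonneg hsuper h0u le_rfl
          (hmono (by omega) (by omega)) (hmono (by omega) (by omega)) huT
      have e2 : ω (u 0) (u (n+2)) = ω s t := by rw [hu0, hun]
      linarith
    -- pick a point to remove
    have hex : ∃ k ∈ range (n+1), ω (u k) (u (k+2)) ≤ 2 * ω s t / (((n+1:ℕ)):ℝ) := by
      have hsc : ∑ _k ∈ range (n+1), (2 * ω s t / (((n+1:ℕ)):ℝ)) = 2 * ω s t := by
        rw [Finset.sum_const, card_range, nsmul_eq_mul]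
        have : (((n+1:ℕ)):ℝ) ≠ 0 := by positivity
        field_simp
      exact Finset.exists_le_of_sum_le (by simp) (by rw [hsc]; exact hsum2)
    obtain ⟨k, hkmem, hk⟩ := hex
    have hkn : k < n + 1 := mem_range.mp hkmem
    set u' : ℕ → ℝ := fun j => if j ≤ k then u j else u (j+1) with hu'
    have hu'0 : u' 0 = s := by simp [hu', hu0]
    have hu'n : u' (n+1) = t := by
      simp only [hu']; rw [if_neg (by omega)]; exact hun
    have hu'step : ∀ j, j < n+1 → u' j ≤ u' (j+1) := by
      intro j hj
      simp only [hu']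
      rcases Nat.lt_or_ge j k with h1 | h1
      · rw [if_pos (by omega), if_pos (by omega)]; exact hstep j (by omega)
      rcases Nat.eq_or_lt_of_le h1 with h2 | h2
      · rw [if_pos (by omega), if_neg (by omega)]
        exact hmono (by omega) (by omega)
      · rw [if_neg (by omega), if_neg (by omega)]; exact hstep (j+1) (by omega)
    -- sum decomposition
    have e1 : ∑ j ∈ range (n+2), Γ (u j) (u (j+1)) =
        (∑ j ∈ range k, Γ (u j) (u (j+1))) + (Γ (u k) (u (k+1)) + Γ (u (k+1)) (u (k+2))
          + ∑ j ∈ Ico (k+2) (n+2), Γ (u j) (u (j+1))) := by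
      rw [range_eq_Ico, ← Finset.sum_Ico_consecutive _ (Nat.zero_le k) (by omega : k ≤ n+2),
        ← Finset.sum_Ico_consecutive _ (by omega : k ≤ k+2) (by omega : k+2 ≤ n+2),
        Finset.sum_eq_sum_Ico_succ_bot (by omega : k < k+2),
        Finset.sum_eq_sum_Ico_succ_bot (by omega : k+1 < k+2), ← range_eq_Ico]
      simp [add_assoc]
    have e2 : ∑ j ∈ range (n+1), Γ (u' j) (u' (j+1)) =
        (∑ j ∈ range k, Γ (u j) (u (j+1))) + (Γ (u k) (u (k+2))
          + ∑ j ∈ Ico (k+2) (n+2), Γ (u j) (u (j+1))) := by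
      rw [range_eq_Ico, ← Finset.sum_Ico_consecutive _ (Nat.zero_le k) (by omega : k ≤ n+1),
        Finset.sum_eq_sum_Ico_succ_bot (by omega : k < n+1), ← range_eq_Ico]
      congr 1
      · apply Finset.sum_congr rfl
        intro j hj
        have hjk : j < k := mem_range.mp hj
        simp only [hu']; rw [if_pos (by omega), if_pos (by omega)]
      congr 1
      · simp only [hu']; rw [if_pos le_rfl, if_neg (by omega)]
      · rw [show k+2 = (k+1)+1 from rfl, show n+2 = (n+1)+1 from rfl,
          ← Finset.sum_Ico_add' (fun j => Γ (u j) (u (j+1))) (k+1) (n+1) 1]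
        apply Finset.sum_congr rfl
        intro j hj
        have hjk : k + 1 ≤ j := (mem_Ico.mp hj).1
        simp only [hu']; rw [if_neg (by omega), if_neg (by omega)]
    have hdiff : ‖(∑ j ∈ range (n+2), Γ (u j) (u (j+1))) -
        (∑ j ∈ range (n+1), Γ (u' j) (u' (j+1)))‖ ≤ (2 * ω s t / (((n+1:ℕ)):ℝ)) ^ θ := by
      rw [e1, e2]
      have e3 : (∑ j ∈ range k, Γ (u j) (u (j+1))) + (Γ (u k) (u (k+1)) + Γ (u (k+1)) (u (k+2))
          + ∑ j ∈ Ico (k+2) (n+2), Γ (u j) (u (j+1))) -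
          ((∑ j ∈ range k, Γ (u j) (u (j+1))) + (Γ (u k) (u (k+2))
          + ∑ j ∈ Ico (k+2) (n+2), Γ (u j) (u (j+1)))) =
          -(Γ (u k) (u (k+2)) - Γ (u k) (u (k+1)) - Γ (u (k+1)) (u (k+2))) := by abel
      rw [e3, norm_neg]
      have hb := hbk (by omega : k ≤ k+2) (by omega : k + 2 ≤ n+2)
      calc ‖Γ (u k) (u (k+2)) - Γ (u k) (u (k+1)) - Γ (u (k+1)) (u (k+2))‖
          ≤ ω (u k) (u (k+2)) ^ θ := halmost _ _ _ hb.1 (hstep k (by omega))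
            (hstep (k+1) (by omega)) hb.2
        _ ≤ (2 * ω s t / (((n+1:ℕ)):ℝ)) ^ θ := by
            apply Real.rpow_le_rpow (hnonneg _ _ hb.1 (hmono (by omega) (by omega)) hb.2) hk
              (by linarith)
    have hIH := IH (n+1) (by omega) u' s t h0s htT hu'0 hu'n hu'step
    calc ‖(∑ j ∈ range (n+2), Γ (u j) (u (j+1))) - Γ s t‖
        ≤ ‖(∑ j ∈ range (n+1), Γ (u' j) (u' (j+1))) - Γ s t‖ +
          ‖(∑ j ∈ range (n+2), Γ (u j) (u (j+1))) -
            (∑ j ∈ range (n+1), Γ (u' j) (u' (j+1)))‖ := by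
          have e4 : (∑ j ∈ range (n+2), Γ (u j) (u (j+1))) - Γ s t =
            ((∑ j ∈ range (n+1), Γ (u' j) (u' (j+1))) - Γ s t) +
            ((∑ j ∈ range (n+2), Γ (u j) (u (j+1))) -
              (∑ j ∈ range (n+1), Γ (u' j) (u' (j+1)))) := by abel
          rw [e4]; exact norm_add_le _ _
      _ ≤ (∑ m ∈ Finset.Icc 1 n, (2 * ω s t / m) ^ θ) + (2 * ω s t / (((n+1:ℕ)):ℝ)) ^ θ := by
          apply add_le_add _ hdiff
          simpa using hIH
      _ = ∑ m ∈ Finset.Icc 1 (n+1), (2 * ω s t / m) ^ θ := by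
          rw [Finset.sum_Icc_succ_top (by omega : 1 ≤ n+1)]
      _ = ∑ m ∈ Finset.Icc 1 (n+2-1), (2 * ω s t / m) ^ θ := rfl

private lemma sew_summable (θ : ℝ) (hθ : 1 < θ) :
    Summable (fun n : ℕ => ((n : ℝ) + 1) ^ (-θ)) := by
  have h : Summable (fun n : ℕ => (n : ℝ) ^ (-θ)) :=
    Real.summable_nat_rpow.2 (by linarith)
  have h2 := (summable_nat_add_iff 1).2 h
  refine h2.congr fun n => ?_
  push_cast; ring_nf

private lemma sew_lemA' {W : Type*} [NormedAddCommGroup W]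
    (T : ℝ) (ω : ℝ → ℝ → ℝ)
    (hnonneg : ∀ s t : ℝ, 0 ≤ s → s ≤ t → t ≤ T → 0 ≤ ω s t)
    (hdiag : ∀ s : ℝ, ω s s = 0)
    (hsuper : ∀ s u t : ℝ, 0 ≤ s → s ≤ u → u ≤ t → t ≤ T → ω s u + ω u t ≤ ω s t)
    (θ : ℝ) (hθ : 1 < θ) (Γ : ℝ → ℝ → W)
    (halmost : ∀ s u t : ℝ, 0 ≤ s → s ≤ u → u ≤ t → t ≤ T →
      ‖Γ s t - Γ s u - Γ u t‖ ≤ ω s t ^ θ)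
    (n : ℕ) (u : ℕ → ℝ) (s t : ℝ) (h0s : 0 ≤ s) (htT : t ≤ T) (hu0 : u 0 = s) (hun : u n = t)
    (hstep : ∀ k, k < n → u k ≤ u (k+1)) :
    ‖(∑ k ∈ range n, Γ (u k) (u (k+1))) - Γ s t‖ ≤
      (2:ℝ) ^ θ * (∑' m : ℕ, ((m : ℝ) + 1) ^ (-θ)) * ω s t ^ θ := by
  have hst : s ≤ t := by
    rw [← hu0, ← hun]
    rcases Nat.eq_zero_or_pos n with h | h
    · rw [h]
    · exact sew_step_mono hstep (Nat.zero_le n) le_rfl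
  have hω : 0 ≤ ω s t := hnonneg s t h0s hst htT
  refine le_trans (sew_lemA T ω hnonneg hdiag hsuper θ hθ Γ halmost n u s t h0s htT hu0 hun hstep) ?_
  have e1 : ∀ m ∈ Finset.Icc 1 (n-1), (2 * ω s t / (m:ℕ)) ^ θ =
      ((2:ℝ) ^ θ * ω s t ^ θ) * ((m:ℝ)) ^ (-θ) := by
    intro m hm
    have hm1 : 1 ≤ m := (Finset.mem_Icc.mp hm).1
    have hmpos : (0:ℝ) < (m:ℝ) := by exact_mod_cast hm1
    rw [div_eq_mul_inv, Real.mul_rpow (by linarith) (by positivity),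
      Real.mul_rpow (by norm_num) hω, Real.inv_rpow hmpos.le, ← Real.rpow_neg hmpos.le]
  rw [Finset.sum_congr rfl e1, ← Finset.mul_sum]
  rw [mul_assoc, mul_comm (ω s t ^ θ), ← mul_assoc]
  apply mul_le_mul_of_nonneg_right _ (by positivity)
  apply mul_le_mul_of_nonneg_left _ (by positivity)
  -- ∑_{m ∈ Icc 1 (n-1)} m^{-θ} ≤ ∑' m, (m+1)^{-θ}
  have e2 : ∑ m ∈ Finset.Icc 1 (n-1), ((m:ℝ)) ^ (-θ) =
      ∑ j ∈ range (n-1), ((j:ℝ) + 1) ^ (-θ) := by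
    rw [← Finset.Ico_add_one_right_eq_Icc, Finset.sum_Ico_eq_sum_range]
    apply Finset.sum_congr (by norm_num)
    intro j _
    push_cast; ring_nf
  rw [e2]
  exact Summable.sum_le_tsum _ (fun j _ => by positivity) (sew_summable θ hθ)

private lemma sew_chain (T : ℝ) (ω : ℝ → ℝ → ℝ)
    (hdiag : ∀ s : ℝ, ω s s = 0)
    (hsuper : ∀ s u t : ℝ, 0 ≤ s → s ≤ u → u ≤ t → t ≤ T → ω s u + ω u t ≤ ω s t) :
    ∀ (n : ℕ) (u : ℕ → ℝ), 0 ≤ u 0 → (∀ k, k < n → u k ≤ u (k+1)) → u n ≤ T →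
    ∑ k ∈ range n, ω (u k) (u (k+1)) ≤ ω (u 0) (u n) := by
  intro n
  induction n with
  | zero => intro u h0 _ _; simp [hdiag]
  | succ n ih =>
    intro u h0 hstep hT
    have hmono : ∀ {i j}, i ≤ j → j ≤ n+1 → u i ≤ u j :=
      fun hij hjn => sew_step_mono hstep hij hjn
    have h1 := ih u h0 (fun k hk => hstep k (by omega)) (le_trans (hmono (by omega) le_rfl) hT)
    rw [Finset.sum_range_succ]
    have h2 := hsuper (u 0) (u n) (u (n+1)) h0 (hmono (by omega) (by omega))
      (hstep n (by omega)) hT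
    linarith

private lemma sew_sum_piece {W : Type*} [AddCommMonoid W] (f : ℕ → W) :
    ∀ (n : ℕ) (φ : ℕ → ℕ), (∀ k, k < n → φ k ≤ φ (k+1)) →
    ∑ j ∈ Ico (φ 0) (φ n), f j = ∑ k ∈ range n, ∑ j ∈ Ico (φ k) (φ (k+1)), f j := by
  intro n
  induction n with
  | zero => simp
  | succ n ih =>
    intro φ hφ
    rw [Finset.sum_range_succ, ← ih φ (fun k hk => hφ k (by omega)),
      Finset.sum_Ico_consecutive]
    · exact sew_step_mono hφ (Nat.zero_le n) (by omega)
    · exact hφ n (by omega)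

private lemma sew_lemB {W : Type*} [NormedAddCommGroup W]
    (T : ℝ) (ω : ℝ → ℝ → ℝ)
    (hnonneg : ∀ s t : ℝ, 0 ≤ s → s ≤ t → t ≤ T → 0 ≤ ω s t)
    (hdiag : ∀ s : ℝ, ω s s = 0)
    (hsuper : ∀ s u t : ℝ, 0 ≤ s → s ≤ u → u ≤ t → t ≤ T → ω s u + ω u t ≤ ω s t)
    (θ : ℝ) (hθ : 1 < θ) (Γ : ℝ → ℝ → W)
    (halmost : ∀ s u t : ℝ, 0 ≤ s → s ≤ u → u ≤ t → t ≤ T →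
      ‖Γ s t - Γ s u - Γ u t‖ ≤ ω s t ^ θ)
    (n m : ℕ) (u v : ℕ → ℝ) (φ : ℕ → ℕ)
    (hu0 : u 0 = 0) (hun : u n = T)
    (hustep : ∀ k, k < n → u k ≤ u (k+1))
    (hvstep : ∀ j, j < m → v j ≤ v (j+1))
    (hφ0 : φ 0 = 0) (hφn : φ n = m)
    (hφmono : ∀ k, k < n → φ k ≤ φ (k+1))
    (hvφ : ∀ k, k ≤ n → v (φ k) = u k) :
    ‖(∑ j ∈ range m, Γ (v j) (v (j+1))) - (∑ k ∈ range n, Γ (u k) (u (k+1)))‖ ≤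
      ∑ k ∈ range n, (2:ℝ) ^ θ * (∑' i : ℕ, ((i : ℝ) + 1) ^ (-θ)) * ω (u k) (u (k+1)) ^ θ := by
  have humono : ∀ {i j}, i ≤ j → j ≤ n → u i ≤ u j :=
    fun hij hjn => sew_step_mono hustep hij hjn
  have hφm : ∀ {i j}, i ≤ j → j ≤ n → φ i ≤ φ j :=
    fun hij hjn => sew_step_mono hφmono hij hjn
  have hdec : ∑ j ∈ range m, Γ (v j) (v (j+1)) =
      ∑ k ∈ range n, ∑ j ∈ Ico (φ k) (φ (k+1)), Γ (v j) (v (j+1)) := by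
    rw [← sew_sum_piece _ n φ hφmono, hφ0, hφn, range_eq_Ico]
  rw [hdec, ← Finset.sum_sub_distrib]
  refine le_trans (norm_sum_le _ _) (Finset.sum_le_sum ?_)
  intro k hk
  have hkn : k < n := mem_range.mp hk
  -- inner partition of [u k, u (k+1)]
  set N := φ (k+1) - φ k with hN
  have hφk : φ k ≤ φ (k+1) := hφmono k hkn
  have hφub : φ (k+1) ≤ m := by rw [← hφn]; exact hφm (by omega) le_rfl
  have hw0 : v (φ k + 0) = u k := by rw [Nat.add_zero]; exact hvφ k (by omega)
  have hwN : v (φ k + N) = u (k+1) := by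
    rw [hN, Nat.add_sub_cancel' hφk]; exact hvφ (k+1) (by omega)
  have hre : ∑ j ∈ Ico (φ k) (φ (k+1)), Γ (v j) (v (j+1)) =
      ∑ j ∈ range N, Γ (v (φ k + j)) (v (φ k + j + 1)) := by
    rw [Finset.sum_Ico_eq_sum_range]
  rw [hre]
  have h0uk : 0 ≤ u k := by rw [← hu0]; exact humono (Nat.zero_le k) (by omega)
  have hukT : u (k+1) ≤ T := by rw [← hun]; exact humono (by omega) le_rfl
  exact sew_lemA' T ω hnonneg hdiag hsuper θ hθ Γ halmost N (fun j => v (φ k + j))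
    (u k) (u (k+1)) h0uk hukT hw0 hwN
    (fun j hj => hvstep (φ k + j) (by omega))

private lemma sew_index (F : Finset ℝ) (x : ℝ) (hx : x ∈ F) :
    (F.filter (fun y => y < x)).card < F.card ∧
    ∀ (h : (F.filter (fun y => y < x)).card < F.card),
      ((F.orderIsoOfFin rfl) ⟨(F.filter (fun y => y < x)).card, h⟩ : ℝ) = x := by
  set e := F.orderIsoOfFin rfl with he
  set i := e.symm ⟨x, hx⟩ with hi
  have hei : e i = ⟨x, hx⟩ := by rw [hi, OrderIso.apply_symm_apply]
  have himg : F.filter (fun y => y < x) = (Finset.Iio i).image (fun j => (e j : ℝ)) := by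
    ext y
    simp only [mem_filter, mem_image, mem_Iio]
    constructor
    · rintro ⟨hyF, hyx⟩
      refine ⟨e.symm ⟨y, hyF⟩, ?_, by simp⟩
      rw [hi, e.symm.lt_iff_lt]
      exact Subtype.mk_lt_mk.mpr hyx
    · rintro ⟨j, hj, rfl⟩
      refine ⟨(e j).2, ?_⟩
      have : e j < e i := e.lt_iff_lt.mpr hj
      rw [hei] at this
      exact this
  have hinj : Function.Injective (fun j : Fin F.card => (e j : ℝ)) := by
    intro a b hab
    exact e.injective (Subtype.ext hab)
  have hcard : (F.filter (fun y => y < x)).card = (i : ℕ) := by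
    rw [himg, Finset.card_image_of_injective _ hinj, Fin.card_Iio]
  refine ⟨hcard ▸ i.isLt, fun h => ?_⟩
  have hfin : (⟨(F.filter (fun y => y < x)).card, h⟩ : Fin F.card) = i := by
    ext; exact hcard
  rw [hfin, hei]

private lemma sew_refine (T : ℝ)
    (n p : ℕ) (u w : ℕ → ℝ)
    (hu0 : u 0 = 0) (hun : u n = T) (hustep : ∀ k, k < n → u k ≤ u (k+1))
    (hw0 : w 0 = 0) (hwp : w p = T) (hwstep : ∀ k, k < p → w k ≤ w (k+1)) :
    ∃ (m : ℕ) (v : ℕ → ℝ) (φ ψ : ℕ → ℕ),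
      (∀ j, j < m → v j ≤ v (j+1)) ∧
      φ 0 = 0 ∧ φ n = m ∧ (∀ k, k < n → φ k ≤ φ (k+1)) ∧ (∀ k, k ≤ n → v (φ k) = u k) ∧
      ψ 0 = 0 ∧ ψ p = m ∧ (∀ k, k < p → ψ k ≤ ψ (k+1)) ∧ (∀ k, k ≤ p → v (ψ k) = w k) := by
  classical
  set F : Finset ℝ := ((range (n+1)).image u) ∪ ((range (p+1)).image w) with hF
  have humono : ∀ {i j}, i ≤ j → j ≤ n → u i ≤ u j :=
    fun hij hjn => sew_step_mono hustep hij hjn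
  have hwmono : ∀ {i j}, i ≤ j → j ≤ p → w i ≤ w j :=
    fun hij hjn => sew_step_mono hwstep hij hjn
  have hmemu : ∀ k, k ≤ n → u k ∈ F := by
    intro k hk
    exact Finset.mem_union_left _ (Finset.mem_image_of_mem u (mem_range.mpr (by omega)))
  have hmemw : ∀ k, k ≤ p → w k ∈ F := by
    intro k hk
    exact Finset.mem_union_right _ (Finset.mem_image_of_mem w (mem_range.mpr (by omega)))
  have hbound : ∀ x ∈ F, 0 ≤ x ∧ x ≤ T := by
    intro x hxF
    rcases Finset.mem_union.mp hxF with hx | hx <;>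
      obtain ⟨k, hk, rfl⟩ := Finset.mem_image.mp hx <;>
      rw [Finset.mem_range] at hk
    · exact ⟨hu0 ▸ humono (Nat.zero_le k) (by omega : k ≤ n),
        hun ▸ humono (by omega : k ≤ n) le_rfl⟩
    · exact ⟨hw0 ▸ hwmono (Nat.zero_le k) (by omega : k ≤ p),
        hwp ▸ hwmono (by omega : k ≤ p) le_rfl⟩
  have hTF : T ∈ F := hun ▸ hmemu n le_rfl
  have hFpos : 0 < F.card := Finset.card_pos.mpr ⟨T, hTF⟩
  set e := F.orderIsoOfFin rfl with he
  set v : ℕ → ℝ := fun j => if h : j < F.card then (e ⟨j, h⟩ : ℝ) else T with hv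
  set m : ℕ := F.card - 1 with hm
  set φ : ℕ → ℕ := fun k => (F.filter (fun y => y < u k)).card with hφ
  set ψ : ℕ → ℕ := fun k => (F.filter (fun y => y < w k)).card with hψ
  -- generic facts about an index function for a point of F
  have hidx : ∀ (x : ℝ) (hx : x ∈ F), (F.filter (fun y => y < x)).card ≤ m ∧
      v ((F.filter (fun y => y < x)).card) = x := by
    intro x hx
    obtain ⟨h1, h2⟩ := sew_index F x hx
    refine ⟨by omega, ?_⟩
    rw [hv]
    simp only [dif_pos h1]
    exact h2 h1
  -- index of T is m
  have hidxT : ∀ (x : ℝ), x ∈ F → x = T → (F.filter (fun y => y < x)).card = m := by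
    intro x hxF heq
    rw [heq]
    have : F.filter (fun y => y < T) = F.erase T := by
      ext y
      simp only [Finset.mem_filter, Finset.mem_erase]
      constructor
      · rintro ⟨hyF, hyT⟩; exact ⟨ne_of_lt hyT, hyF⟩
      · rintro ⟨hyT, hyF⟩; exact ⟨hyF, lt_of_le_of_ne (hbound y hyF).2 hyT⟩
    rw [this, Finset.card_erase_of_mem hTF]
  -- index of 0 is 0
  have hidx0 : ∀ (x : ℝ), x = 0 → (F.filter (fun y => y < x)).card = 0 := by
    intro x heq
    rw [heq, Finset.card_eq_zero]
    ext y
    simp only [Finset.mem_filter, Finset.notMem_empty, iff_false, not_and]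
    intro hyF
    exact not_lt.mpr (hbound y hyF).1
  -- v is monotone on [0, m]
  have hvstep : ∀ j, j < m → v j ≤ v (j+1) := by
    intro j hj
    rw [hv]
    simp only
    rw [dif_pos (by omega : j < F.card), dif_pos (by omega : j + 1 < F.card)]
    have : (⟨j, by omega⟩ : Fin F.card) ≤ ⟨j+1, by omega⟩ := by
      simp [Fin.le_def]
    exact Subtype.coe_le_coe.mpr (e.le_iff_le.mpr this)
  have hφmono' : ∀ (a b : ℝ), a ≤ b →
      (F.filter (fun y => y < a)).card ≤ (F.filter (fun y => y < b)).card := by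
    intro a b hab
    apply Finset.card_le_card
    intro y hy
    rw [Finset.mem_filter] at hy ⊢
    exact ⟨hy.1, lt_of_lt_of_le hy.2 hab⟩
  refine ⟨m, v, φ, ψ, hvstep, ?_, ?_, ?_, ?_, ?_, ?_, ?_, ?_⟩
  · exact hidx0 (u 0) hu0
  · exact hidxT (u n) (hmemu n le_rfl) hun
  · intro k hk; exact hφmono' _ _ (hustep k hk)
  · intro k hk; exact (hidx (u k) (hmemu k hk)).2
  · exact hidx0 (w 0) hw0
  · exact hidxT (w p) (hmemw p le_rfl) hwp
  · intro k hk; exact hφmono' _ _ (hwstep k hk)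
  · intro k hk; exact (hidx (w k) (hmemw k hk)).2

private lemma sew_mesh_sum (T : ℝ) (ω : ℝ → ℝ → ℝ)
    (hnonneg : ∀ s t : ℝ, 0 ≤ s → s ≤ t → t ≤ T → 0 ≤ ω s t)
    (hdiag : ∀ s : ℝ, ω s s = 0)
    (hsuper : ∀ s u t : ℝ, 0 ≤ s → s ≤ u → u ≤ t → t ≤ T → ω s u + ω u t ≤ ω s t)
    (θ : ℝ) (hθ : 1 < θ) (δ : ℝ) (hδ : 0 < δ)
    (n : ℕ) (u : ℕ → ℝ) (hu0 : u 0 = 0) (hun : u n = T)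
    (hustep : ∀ k, k < n → u k ≤ u (k+1))
    (hmesh : ∀ k, k < n → ω (u k) (u (k+1)) < δ) :
    ∑ k ∈ range n, ω (u k) (u (k+1)) ^ θ ≤ δ ^ (θ-1) * ω 0 T := by
  have humono : ∀ {i j}, i ≤ j → j ≤ n → u i ≤ u j :=
    fun hij hjn => sew_step_mono hustep hij hjn
  have hbd : ∀ k, k < n → 0 ≤ u k ∧ u (k+1) ≤ T := by
    intro k hk
    exact ⟨hu0 ▸ humono (Nat.zero_le k) (by omega), hun ▸ humono (by omega) le_rfl⟩
  calc ∑ k ∈ range n, ω (u k) (u (k+1)) ^ θ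
      ≤ ∑ k ∈ range n, δ ^ (θ-1) * ω (u k) (u (k+1)) := by
        apply Finset.sum_le_sum
        intro k hk
        have hk' := mem_range.mp hk
        have hω : 0 ≤ ω (u k) (u (k+1)) :=
          hnonneg _ _ (hbd k hk').1 (hustep k hk') (hbd k hk').2
        rcases eq_or_lt_of_le hω with h0 | h0
        · rw [← h0, Real.zero_rpow (by linarith)]
          positivity
        · have : ω (u k) (u (k+1)) ^ θ = ω (u k) (u (k+1)) ^ (θ-1) * ω (u k) (u (k+1)) := by
            rw [← Real.rpow_add_one (ne_of_gt h0)]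
            ring_nf
          rw [this]
          apply mul_le_mul_of_nonneg_right _ hω
          exact Real.rpow_le_rpow hω (le_of_lt (hmesh k hk')) (by linarith)
    _ = δ ^ (θ-1) * ∑ k ∈ range n, ω (u k) (u (k+1)) := by rw [Finset.mul_sum]
    _ ≤ δ ^ (θ-1) * ω 0 T := by
        apply mul_le_mul_of_nonneg_left _ (by positivity)
        have := sew_chain T ω hdiag hsuper n u (by rw [hu0]) hustep (by rw [hun])
        rw [hu0, hun] at this
        exact this

private lemma sew_exists_partition (T : ℝ) (hT : 0 ≤ T) (ω : ℝ → ℝ → ℝ)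
    (hdiag : ∀ s : ℝ, ω s s = 0)
    (hcont : Continuous fun q : ℝ × ℝ => ω q.1 q.2)
    (δ : ℝ) (hδ : 0 < δ) :
    ∃ (n : ℕ) (u : ℕ → ℝ), 0 < n ∧ u 0 = 0 ∧ u n = T ∧
      (∀ k, k < n → u k ≤ u (k+1)) ∧ (∀ k, k < n → ω (u k) (u (k+1)) < δ) := by
  -- uniform continuity on the compact square
  set K : Set (ℝ × ℝ) := Set.Icc 0 T ×ˢ Set.Icc 0 T with hK
  have hcomp : IsCompact K := (isCompact_Icc).prod isCompact_Icc
  have hUC : UniformContinuousOn (fun q : ℝ × ℝ => ω q.1 q.2) K :=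
    hcomp.uniformContinuousOn_of_continuous hcont.continuousOn
  rw [Metric.uniformContinuousOn_iff] at hUC
  obtain ⟨h, hh, hball⟩ := hUC δ hδ
  -- uniform partition with N pieces
  set N : ℕ := ⌊T / h⌋₊ + 1 with hN
  have hTN : T / N < h := by
    rw [div_lt_iff₀ (by positivity)]
    have h1 : T / h < N := by
      rw [hN]; push_cast; exact Nat.lt_floor_add_one _
    have h2 := mul_lt_mul_of_pos_right h1 hh
    rw [div_mul_cancel₀ T (ne_of_gt hh)] at h2
    linarith
  set u : ℕ → ℝ := fun k => (k : ℝ) * T / N with hu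
  have hmem : ∀ k, k ≤ N → u k ∈ Set.Icc (0:ℝ) T := by
    intro k hk
    constructor
    · rw [hu]; positivity
    · rw [hu]
      rw [div_le_iff₀ (by positivity)]
      have hkN : (k:ℝ) ≤ N := by exact_mod_cast hk
      nlinarith
  refine ⟨N, u, by omega, by simp [hu], ?_, ?_, ?_⟩
  · rw [hu]; exact mul_div_cancel_left₀ T (by positivity : (N:ℝ) ≠ 0)
  · intro k hk
    rw [hu]
    apply div_le_div_of_nonneg_right _ (by positivity)
    apply mul_le_mul_of_nonneg_right _ hT
    exact_mod_cast Nat.le_succ k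
  · intro k hk
    have hstep : u (k+1) - u k = T / N := by
      rw [hu]; push_cast; ring
    have h1 := hball (u k, u (k+1)) ⟨hmem k (by omega), hmem (k+1) (by omega)⟩
      (u k, u k) ⟨hmem k (by omega), hmem k (by omega)⟩
    have hd : dist ((u k, u (k+1)) : ℝ × ℝ) ((u k, u k) : ℝ × ℝ) < h := by
      rw [Prod.dist_eq]
      simp only [dist_self]
      rw [Real.dist_eq]
      have : |u (k+1) - u k| = T / N := by rw [hstep]; exact abs_of_nonneg (by positivity)
      rw [max_lt_iff]
      exact ⟨hh, by rw [this]; exact hTN⟩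
    have := h1 hd
    simp only [hdiag] at this
    rw [Real.dist_eq, sub_zero] at this
    calc ω (u k) (u (k+1)) ≤ |ω (u k) (u (k+1))| := le_abs_self _
      _ < δ := this

/-- Sewing lemma / Young's maximal inequality: if `Γ` is almost additive with
defect bounded by `ω(s,t)^θ`, `θ > 1`, then the Riemann sums
`∑ Γ(t_k, t_{k+1})` converge as the `ω`-mesh tends to zero, and the limit `I`
satisfies `‖I − Γ(0,T)‖ ≤ 2^θ ζ(θ) ω(0,T)^θ`. -/
theorem sewing_lemma
    {W : Type*} [NormedAddCommGroup W] [NormedSpace ℝ W] [CompleteSpace W]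
    (T : ℝ) (hT : 0 ≤ T) (ω : ℝ → ℝ → ℝ)
    (hnonneg : ∀ s t : ℝ, 0 ≤ s → s ≤ t → t ≤ T → 0 ≤ ω s t)
    (hdiag : ∀ s : ℝ, ω s s = 0)
    (hcont : Continuous fun q : ℝ × ℝ => ω q.1 q.2)
    (hsuper : ∀ s u t : ℝ, 0 ≤ s → s ≤ u → u ≤ t → t ≤ T →
      ω s u + ω u t ≤ ω s t)
    (θ : ℝ) (hθ : 1 < θ) (Γ : ℝ → ℝ → W)
    (halmost : ∀ s u t : ℝ, 0 ≤ s → s ≤ u → u ≤ t → t ≤ T →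
      ‖Γ s t - Γ s u - Γ u t‖ ≤ ω s t ^ θ) :
    ∃ I : W,
      ‖I - Γ 0 T‖ ≤ (2 : ℝ) ^ θ * (∑' n : ℕ, ((n : ℝ) + 1) ^ (-θ)) * ω 0 T ^ θ ∧
      ∀ ε > (0 : ℝ), ∃ δ > (0 : ℝ),
        ∀ (n : ℕ) (u : ℕ → ℝ), 0 < n → u 0 = 0 → u n = T →
          (∀ k, k < n → u k ≤ u (k + 1)) →
          (∀ k, k < n → ω (u k) (u (k + 1)) < δ) →
          ‖(∑ k ∈ Finset.range n, Γ (u k) (u (k + 1))) - I‖ < ε := by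
  have hZ0 : 0 ≤ ∑' n : ℕ, ((n : ℝ) + 1) ^ (-θ) := tsum_nonneg (fun n => by positivity)
  set Z : ℝ := ∑' n : ℕ, ((n : ℝ) + 1) ^ (-θ) with hZ
  set C : ℝ := (2:ℝ) ^ θ * Z with hC
  have hC0 : 0 ≤ C := by positivity
  have hωT : 0 ≤ ω 0 T := hnonneg 0 T le_rfl hT le_rfl
  -- distance between two fine partitions via common refinement
  have hdist : ∀ (δ₁ δ₂ : ℝ), 0 < δ₁ → 0 < δ₂ →
      ∀ (n : ℕ) (u : ℕ → ℝ) (p : ℕ) (w : ℕ → ℝ),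
      u 0 = 0 → u n = T → (∀ k, k < n → u k ≤ u (k+1)) → (∀ k, k < n → ω (u k) (u (k+1)) < δ₁) →
      w 0 = 0 → w p = T → (∀ k, k < p → w k ≤ w (k+1)) → (∀ k, k < p → ω (w k) (w (k+1)) < δ₂) →
      ‖(∑ k ∈ Finset.range n, Γ (u k) (u (k+1))) - (∑ k ∈ Finset.range p, Γ (w k) (w (k+1)))‖
        ≤ C * (δ₁ ^ (θ-1) + δ₂ ^ (θ-1)) * ω 0 T := by
    intro δ₁ δ₂ hδ₁ hδ₂ n u p w hu0 hun hustep humesh hw0 hwp hwstep hwmesh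
    obtain ⟨m, v, φ, ψ, hvstep, hφ0, hφn, hφmono, hvφ, hψ0, hψp, hψmono, hvψ⟩ :=
      sew_refine T n p u w hu0 hun hustep hw0 hwp hwstep
    have h1 := sew_lemB T ω hnonneg hdiag hsuper θ hθ Γ halmost n m u v φ
      hu0 hun hustep hvstep hφ0 hφn hφmono hvφ
    have h2 := sew_lemB T ω hnonneg hdiag hsuper θ hθ Γ halmost p m w v ψ
      hw0 hwp hwstep hvstep hψ0 hψp hψmono hvψ
    have h3 := sew_mesh_sum T ω hnonneg hdiag hsuper θ hθ δ₁ hδ₁ n u hu0 hun hustep humesh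
    have h4 := sew_mesh_sum T ω hnonneg hdiag hsuper θ hθ δ₂ hδ₂ p w hw0 hwp hwstep hwmesh
    have e1 : ∀ (q : ℕ) (x : ℕ → ℝ),
        ∑ k ∈ Finset.range q, (2:ℝ)^θ * Z * ω (x k) (x (k+1)) ^ θ =
        C * ∑ k ∈ Finset.range q, ω (x k) (x (k+1)) ^ θ := by
      intro q x; rw [Finset.mul_sum]
    rw [e1] at h1 h2
    have tri : ‖(∑ k ∈ Finset.range n, Γ (u k) (u (k+1))) -
        (∑ k ∈ Finset.range p, Γ (w k) (w (k+1)))‖ ≤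
        ‖(∑ j ∈ Finset.range m, Γ (v j) (v (j+1))) - (∑ k ∈ Finset.range n, Γ (u k) (u (k+1)))‖ +
        ‖(∑ j ∈ Finset.range m, Γ (v j) (v (j+1))) - (∑ k ∈ Finset.range p, Γ (w k) (w (k+1)))‖ := by
      have e : (∑ k ∈ Finset.range n, Γ (u k) (u (k+1))) -
          (∑ k ∈ Finset.range p, Γ (w k) (w (k+1))) =
          -((∑ j ∈ Finset.range m, Γ (v j) (v (j+1))) - (∑ k ∈ Finset.range n, Γ (u k) (u (k+1)))) +
          ((∑ j ∈ Finset.range m, Γ (v j) (v (j+1))) - (∑ k ∈ Finset.range p, Γ (w k) (w (k+1)))) := by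
        abel
      rw [e]
      refine le_trans (norm_add_le _ _) ?_
      rw [norm_neg]
    have hb1 : C * ∑ k ∈ Finset.range n, ω (u k) (u (k+1)) ^ θ ≤ C * (δ₁ ^ (θ-1) * ω 0 T) :=
      mul_le_mul_of_nonneg_left h3 hC0
    have hb2 : C * ∑ k ∈ Finset.range p, ω (w k) (w (k+1)) ^ θ ≤ C * (δ₂ ^ (θ-1) * ω 0 T) :=
      mul_le_mul_of_nonneg_left h4 hC0
    calc ‖(∑ k ∈ Finset.range n, Γ (u k) (u (k+1))) -
        (∑ k ∈ Finset.range p, Γ (w k) (w (k+1)))‖ ≤ _ + _ := tri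
      _ ≤ C * (δ₁ ^ (θ-1) * ω 0 T) + C * (δ₂ ^ (θ-1) * ω 0 T) := by
          exact add_le_add (le_trans h1 hb1) (le_trans h2 hb2)
      _ = C * (δ₁ ^ (θ-1) + δ₂ ^ (θ-1)) * ω 0 T := by ring
  -- a sequence of partitions with mesh 1/(q+1)
  have hpart : ∀ q : ℕ, ∃ (n : ℕ) (u : ℕ → ℝ), 0 < n ∧ u 0 = 0 ∧ u n = T ∧
      (∀ k, k < n → u k ≤ u (k+1)) ∧ (∀ k, k < n → ω (u k) (u (k+1)) < 1/((q:ℝ)+1)) :=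
    fun q => sew_exists_partition T hT ω hdiag hcont (1/((q:ℝ)+1)) (by positivity)
  choose nq uq hq0 hq1 hq2 hq3 hq4 using hpart
  set S : ℕ → W := fun q => ∑ k ∈ Finset.range (nq q), Γ (uq q k) (uq q (k+1)) with hS
  set b : ℕ → ℝ := fun q => C * (1/((q:ℝ)+1)) ^ (θ-1) * ω 0 T with hb
  have hbnn : ∀ q, 0 ≤ b q := fun q => by rw [hb]; positivity
  have hbanti : ∀ {q r}, q ≤ r → b r ≤ b q := by
    intro q r hqr
    rw [hb]
    simp only
    apply mul_le_mul_of_nonneg_right _ hωT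
    apply mul_le_mul_of_nonneg_left _ hC0
    apply Real.rpow_le_rpow (by positivity) _ (by linarith)
    apply div_le_div_of_nonneg_left (by norm_num) (by positivity)
    have := (Nat.cast_le (α := ℝ)).mpr hqr
    linarith
  have hSd : ∀ q r, dist (S q) (S r) ≤ b q + b r := by
    intro q r
    have := hdist (1/((q:ℝ)+1)) (1/((r:ℝ)+1)) (by positivity) (by positivity)
      (nq q) (uq q) (nq r) (uq r) (hq1 q) (hq2 q) (hq3 q) (hq4 q)
      (hq1 r) (hq2 r) (hq3 r) (hq4 r)
    calc dist (S q) (S r) = ‖S q - S r‖ := dist_eq_norm _ _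
      _ ≤ C * ((1/((q:ℝ)+1)) ^ (θ-1) + (1/((r:ℝ)+1)) ^ (θ-1)) * ω 0 T := this
      _ = b q + b r := by rw [hb]; ring
  have hbtend : Filter.Tendsto b Filter.atTop (nhds 0) := by
    have h1 : Filter.Tendsto (fun q : ℕ => 1/((q:ℝ)+1)) Filter.atTop (nhds 0) :=
      tendsto_one_div_add_atTop_nhds_zero_nat
    have h2 := h1.rpow_const (Or.inr (by linarith : (0:ℝ) ≤ θ-1))
    rw [Real.zero_rpow (by linarith : θ - 1 ≠ 0)] at h2
    have h4 : Filter.Tendsto (fun q : ℕ => C * (1/((q:ℝ)+1)) ^ (θ-1) * ω 0 T)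
        Filter.atTop (nhds (C * 0 * ω 0 T)) := (h2.const_mul C).mul_const (ω 0 T)
    rw [hb]
    simpa using h4
  have hcauchy : CauchySeq S := by
    apply cauchySeq_of_le_tendsto_0 (fun q => 2 * b q)
    · intro q r N hq hr
      calc dist (S q) (S r) ≤ b q + b r := hSd q r
        _ ≤ b N + b N := add_le_add (hbanti hq) (hbanti hr)
        _ = 2 * b N := by ring
    · have h5 := hbtend.const_mul (2:ℝ)
      rw [mul_zero] at h5
      exact h5
  obtain ⟨I, hI⟩ := cauchySeq_tendsto_of_complete hcauchy
  refine ⟨I, ?_, ?_⟩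
  · have h1 : ∀ q, ‖S q - Γ 0 T‖ ≤ C * ω 0 T ^ θ := by
      intro q
      have := sew_lemA' T ω hnonneg hdiag hsuper θ hθ Γ halmost (nq q) (uq q) 0 T
        le_rfl le_rfl (hq1 q) (hq2 q) (hq3 q)
      calc ‖S q - Γ 0 T‖ ≤ (2:ℝ)^θ * Z * ω 0 T ^ θ := this
        _ = C * ω 0 T ^ θ := by rw [hC]
    have h2 : Filter.Tendsto (fun q => ‖S q - Γ 0 T‖) Filter.atTop (nhds ‖I - Γ 0 T‖) :=
      ((hI.sub_const _).norm)
    calc ‖I - Γ 0 T‖ ≤ C * ω 0 T ^ θ := le_of_tendsto h2 (Filter.Eventually.of_forall h1)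
      _ = (2:ℝ)^θ * Z * ω 0 T ^ θ := by rw [hC]
  · intro ε hε
    have hCω : (0:ℝ) < C * ω 0 T + 1 := by positivity
    set r : ℝ := ε / (2 * (C * ω 0 T + 1)) with hr
    have hr0 : 0 < r := by rw [hr]; positivity
    set δ : ℝ := min 1 (r ^ (1/(θ-1))) with hδdef
    have hδ0 : 0 < δ := lt_min one_pos (Real.rpow_pos_of_pos hr0 _)
    refine ⟨δ, hδ0, ?_⟩
    intro n u hn hu0 hun hstep hmesh
    have key : ∀ q : ℕ, ‖(∑ k ∈ Finset.range n, Γ (u k) (u (k+1))) - S q‖ ≤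
        C * (δ ^ (θ-1) + (1/((q:ℝ)+1)) ^ (θ-1)) * ω 0 T := by
      intro q
      exact hdist δ (1/((q:ℝ)+1)) hδ0 (by positivity) n u (nq q) (uq q)
        hu0 hun hstep hmesh (hq1 q) (hq2 q) (hq3 q) (hq4 q)
    have hlim : Filter.Tendsto (fun q => ‖(∑ k ∈ Finset.range n, Γ (u k) (u (k+1))) - S q‖)
        Filter.atTop (nhds ‖(∑ k ∈ Finset.range n, Γ (u k) (u (k+1))) - I‖) :=
      ((tendsto_const_nhds.sub hI).norm)
    have hlim2 : Filter.Tendsto (fun q : ℕ => C * (δ ^ (θ-1) + (1/((q:ℝ)+1)) ^ (θ-1)) * ω 0 T)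
        Filter.atTop (nhds (C * (δ ^ (θ-1) + 0) * ω 0 T)) := by
      have h1 : Filter.Tendsto (fun q : ℕ => 1/((q:ℝ)+1)) Filter.atTop (nhds 0) :=
        tendsto_one_div_add_atTop_nhds_zero_nat
      have h2 := h1.rpow_const (Or.inr (by linarith : (0:ℝ) ≤ θ-1))
      rw [Real.zero_rpow (by linarith : θ - 1 ≠ 0)] at h2
      exact (((h2.const_add (δ ^ (θ-1))).const_mul C).mul_const (ω 0 T))
    have hfin : ‖(∑ k ∈ Finset.range n, Γ (u k) (u (k+1))) - I‖ ≤ C * (δ ^ (θ-1) + 0) * ω 0 T :=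
      le_of_tendsto_of_tendsto' hlim hlim2 key
    have hδr : δ ^ (θ-1) ≤ r := by
      have h1 : δ ≤ r ^ (1/(θ-1)) := min_le_right _ _
      have h2 : δ ^ (θ-1) ≤ (r ^ (1/(θ-1))) ^ (θ-1) :=
        Real.rpow_le_rpow hδ0.le h1 (by linarith)
      rwa [← Real.rpow_mul hr0.le, one_div_mul_cancel (by linarith : θ - 1 ≠ 0),
        Real.rpow_one] at h2
    have hfin2 : C * (δ ^ (θ-1) + 0) * ω 0 T ≤ (C * ω 0 T) * r := by
      have : C * (δ ^ (θ-1) + 0) * ω 0 T = (C * ω 0 T) * δ ^ (θ-1) := by ring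
      rw [this]
      exact mul_le_mul_of_nonneg_left hδr (by positivity)
    have hfin3 : (C * ω 0 T) * r < ε := by
      have h1 : (C * ω 0 T) * r ≤ (C * ω 0 T + 1) * r := by nlinarith
      have h2 : (C * ω 0 T + 1) * r = ε / 2 := by
        rw [hr]; field_simp
      linarith
    linarith
end

section
/- Let p ∈ [1,2) and let σ : [0,T] → ℝ be continuous of finite p-variation. Then the Young integral ∫_0^T σ_u dσ_u exists as the limit of Riemann sums ∑_k σ_{t_k}(σ_{t_{k+1}} − σ_{t_k}) over partitions with mesh tending to zero, and satisfies |∫_s^t σ_u dσ_u − σ_s(σ_t − σ_s)| ≤ C ‖σ‖_{p-var,[s,t]}^2 for a constant C depending only on p. -/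
/-- The set of `p`-variation partition sums `∑_k |σ_{t_{k+1}} − σ_{t_k}|^p` of
a real path `σ` over `[s,t]`; its supremum is `‖σ‖_{p-var,[s,t]}^p`. -/
def pVarSumsReal (p : ℝ) (σ : ℝ → ℝ) (s t : ℝ) : Set ℝ :=
  {r | ∃ (n : ℕ) (u : ℕ → ℝ), 0 < n ∧ u 0 = s ∧ u n = t ∧
    (∀ k, k < n → u k ≤ u (k + 1)) ∧
    r = ∑ k ∈ Finset.range n, |σ (u (k + 1)) - σ (u k)| ^ p}

lemma chain_mono {u : ℕ → ℝ} {n : ℕ} (h : ∀ k, k < n → u k ≤ u (k+1)) :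
    ∀ i j, i ≤ j → j ≤ n → u i ≤ u j := by
  intro i j hij hjn
  induction j with
  | zero => rw [Nat.le_zero.mp hij]
  | succ m ih =>
    rcases Nat.eq_or_lt_of_le hij with h1 | h1
    · rw [h1]
    · exact le_trans (ih (Nat.lt_succ_iff.mp h1) (le_trans (Nat.le_succ m) hjn))
        (h m (by omega))

lemma pvar_nonneg {p : ℝ} {σ : ℝ → ℝ} {s t r : ℝ} (hr : r ∈ pVarSumsReal p σ s t) : 0 ≤ r := by
  obtain ⟨n, u, hn, h0, hn', hm, rfl⟩ := hr
  exact Finset.sum_nonneg fun k _ => Real.rpow_nonneg (abs_nonneg _) p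

lemma pvar_single {p : ℝ} (σ : ℝ → ℝ) {s t : ℝ} (hst : s ≤ t) :
    |σ t - σ s| ^ p ∈ pVarSumsReal p σ s t := by
  refine ⟨1, fun k => if k = 0 then s else t, one_pos, by simp, by simp, ?_, by simp⟩
  intro k hk
  interval_cases k
  simp [hst]

lemma pvar_bdd_sub {p : ℝ} {σ : ℝ → ℝ} {T s t : ℝ} (hs : 0 ≤ s) (hst : s ≤ t) (htT : t ≤ T)
    (hB : BddAbove (pVarSumsReal p σ 0 T)) : BddAbove (pVarSumsReal p σ s t) := by
  obtain ⟨B, hB⟩ := hB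
  refine ⟨B, fun r hr => ?_⟩
  obtain ⟨n, u, hn, h0, hn', hm, rfl⟩ := hr
  set v : ℕ → ℝ := fun k => if k = 0 then 0 else if k ≤ n + 1 then u (k - 1) else T with hv
  have hmem : (∑ k ∈ Finset.range (n + 2), |σ (v (k + 1)) - σ (v k)| ^ p)
      ∈ pVarSumsReal p σ 0 T := by
    refine ⟨n + 2, v, by omega, by simp [hv], by simp [hv], ?_, rfl⟩
    intro k hk
    rcases Nat.eq_zero_or_pos k with rfl | hk0
    · simpa [hv, h0] using hs
    · rcases Nat.lt_or_ge k (n + 1) with hk1 | hk1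
      · have h1 : ¬ (k = 0) := by omega
        have h2 : k ≤ n + 1 := by omega
        have h3 : ¬ (k + 1 = 0) := by omega
        have h4 : k + 1 ≤ n + 1 := by omega
        simp only [hv, if_neg h1, if_pos h2, if_neg h3, if_pos h4]
        have := hm (k - 1) (by omega)
        have hkk : k - 1 + 1 = k + 1 - 1 := by omega
        rwa [hkk] at this
      · have hkeq : k = n + 1 := by omega
        subst hkeq
        have h1 : ¬ (n + 1 = 0) := by omega
        have h3 : ¬ (n + 1 + 1 ≤ n + 1) := by omega
        simp only [hv, if_neg h1, if_pos (le_refl (n+1)), if_neg (by omega : ¬ (n+1+1 = 0)), if_neg h3]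
        simpa [hn'] using htT
  have hle : (∑ k ∈ Finset.range n, |σ (u (k + 1)) - σ (u k)| ^ p)
      ≤ ∑ k ∈ Finset.range (n + 2), |σ (v (k + 1)) - σ (v k)| ^ p := by
    rw [Finset.sum_range_succ', Finset.sum_range_succ]
    have heq : ∀ k ∈ Finset.range n,
        |σ (u (k + 1)) - σ (u k)| ^ p = |σ (v (k + 1 + 1)) - σ (v (k + 1))| ^ p := by
      intro k hk
      simp only [Finset.mem_range] at hk
      have h1 : ¬ (k + 1 = 0) := by omega
      have h2 : k + 1 ≤ n + 1 := by omega
      have h4 : k + 1 + 1 ≤ n + 1 := by omega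
      simp only [hv, if_neg h1, if_pos h2, if_neg (by omega : ¬ (k+1+1 = 0)), if_pos h4]
      norm_num
    rw [Finset.sum_congr rfl heq]
    have hnn : (0:ℝ) ≤ |σ (v (n + 1 + 1)) - σ (v (n + 1))| ^ p :=
      Real.rpow_nonneg (abs_nonneg _) p
    have hnn0 : (0:ℝ) ≤ |σ (v (0 + 1)) - σ (v 0)| ^ p :=
      Real.rpow_nonneg (abs_nonneg _) p
    nlinarith [Finset.sum_nonneg (fun k (_ : k ∈ Finset.range n) =>
      Real.rpow_nonneg (abs_nonneg (σ (v (k+1+1)) - σ (v (k+1)))) p)]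
  exact hle.trans (hB hmem)

/-- Young integration for `p < 2`: for continuous `σ` of finite `p`-variation,
the integral `∫_0^T σ dσ` exists as the limit of Riemann sums
`∑ σ_{t_k}(σ_{t_{k+1}} − σ_{t_k})` as the mesh tends to zero, and
`|∫_s^t σ dσ − σ_s(σ_t − σ_s)| ≤ C·‖σ‖_{p-var,[s,t]}^2` with `C` depending
only on `p`. -/
theorem young_integral_self
    (p : ℝ) (hp : 1 ≤ p) (hp2 : p < 2) :
    ∃ C : ℝ, 0 < C ∧
      ∀ (T : ℝ) (σ : ℝ → ℝ), 0 ≤ T → ContinuousOn σ (Set.Icc 0 T) →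
        BddAbove (pVarSumsReal p σ 0 T) →
        ∃ I : ℝ → ℝ → ℝ,
          (∀ ε > (0 : ℝ), ∃ δ > (0 : ℝ),
            ∀ (n : ℕ) (u : ℕ → ℝ), 0 < n → u 0 = 0 → u n = T →
              (∀ k, k < n → u k ≤ u (k + 1)) →
              (∀ k, k < n → u (k + 1) - u k < δ) →
              |(∑ k ∈ Finset.range n,
                  σ (u k) * (σ (u (k + 1)) - σ (u k))) - I 0 T| < ε) ∧
          ∀ s t : ℝ, 0 ≤ s → s ≤ t → t ≤ T →
            |I s t - σ s * (σ t - σ s)| ≤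
              C * sSup (pVarSumsReal p σ s t) ^ (2 / p) := by
  have hp0 : 0 < p := lt_of_lt_of_le one_pos hp
  refine ⟨1, one_pos, ?_⟩
  intro T σ hT hσ hBdd
  refine ⟨fun s t => (σ t ^ 2 - σ s ^ 2) / 2, ?_, ?_⟩
  · -- Riemann sum convergence
    intro ε hε
    set S := sSup (pVarSumsReal p σ 0 T) with hS
    have hS0 : 0 ≤ S := by
      have := le_csSup hBdd (pvar_single σ hT)
      exact le_trans (Real.rpow_nonneg (abs_nonneg _) p) this
    -- choose η
    set η : ℝ := min 1 ((ε / (S + 1)) ^ (2 - p)⁻¹) with hη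
    have hεS : 0 < ε / (S + 1) := div_pos hε (by linarith)
    have hη0 : 0 < η := lt_min one_pos (Real.rpow_pos_of_pos hεS _)
    have hηp : η ^ (2 - p) ≤ ε / (S + 1) := by
      calc η ^ (2 - p) ≤ ((ε / (S + 1)) ^ (2 - p)⁻¹) ^ (2 - p) :=
            Real.rpow_le_rpow (le_of_lt hη0) (min_le_right _ _) (by linarith)
        _ = ε / (S + 1) := by
            rw [← Real.rpow_mul hεS.le, inv_mul_cancel₀ (by linarith : (2:ℝ) - p ≠ 0),
              Real.rpow_one]
    have hcomp : IsCompact (Set.Icc (0:ℝ) T) := isCompact_Icc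
    have huc : UniformContinuousOn σ (Set.Icc 0 T) :=
      hcomp.uniformContinuousOn_of_continuous hσ
    rw [Metric.uniformContinuousOn_iff] at huc
    obtain ⟨δ, hδ0, hδ⟩ := huc η hη0
    refine ⟨δ, hδ0, ?_⟩
    intro n u hn h0 hnT hmono hmesh
    have key : ∀ k ∈ Finset.range n, σ (u k) * (σ (u (k+1)) - σ (u k))
        = ((σ (u (k+1)) ^ 2 - σ (u k) ^ 2) / 2 - (σ (u (k+1)) - σ (u k)) ^ 2 / 2) :=
      fun k _ => by ring
    rw [Finset.sum_congr rfl key, Finset.sum_sub_distrib, ← Finset.sum_div, ← Finset.sum_div,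
      Finset.sum_range_sub (fun k => σ (u k) ^ 2)]
    have hsum_nn : (0:ℝ) ≤ ∑ k ∈ Finset.range n, (σ (u (k+1)) - σ (u k)) ^ 2 :=
      Finset.sum_nonneg fun k _ => sq_nonneg _
    have habs : |(σ (u n) ^ 2 - σ (u 0) ^ 2) / 2
        - (∑ k ∈ Finset.range n, (σ (u (k+1)) - σ (u k)) ^ 2) / 2 - (σ T ^ 2 - σ 0 ^ 2) / 2|
        = (∑ k ∈ Finset.range n, (σ (u (k+1)) - σ (u k)) ^ 2) / 2 := by
      rw [h0, hnT, show (σ T ^ 2 - σ 0 ^ 2) / 2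
        - (∑ k ∈ Finset.range n, (σ (u (k+1)) - σ (u k)) ^ 2) / 2 - (σ T ^ 2 - σ 0 ^ 2) / 2
        = -((∑ k ∈ Finset.range n, (σ (u (k+1)) - σ (u k)) ^ 2) / 2) by ring,
        abs_neg, abs_of_nonneg (by linarith)]
    rw [habs]
    -- bound each term
    have hterm : ∀ k, k < n → (σ (u (k+1)) - σ (u k)) ^ 2
        ≤ η ^ (2 - p) * |σ (u (k+1)) - σ (u k)| ^ p := by
      intro k hk
      have hu0k : u 0 ≤ u k := chain_mono hmono 0 k (Nat.zero_le _) (le_of_lt hk)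
      have hukn : u (k+1) ≤ u n := chain_mono hmono (k+1) n hk le_rfl
      have huk : u k ∈ Set.Icc (0:ℝ) T :=
        ⟨h0 ▸ hu0k, le_trans (hmono k hk) (hnT ▸ hukn)⟩
      have huk1 : u (k+1) ∈ Set.Icc (0:ℝ) T :=
        ⟨h0 ▸ le_trans hu0k (hmono k hk), hnT ▸ hukn⟩
      have hdist : dist (u (k+1)) (u k) < δ := by
        rw [Real.dist_eq, abs_of_nonneg (by linarith [hmono k hk])]
        exact hmesh k hk
      have haη : |σ (u (k+1)) - σ (u k)| < η := by
        have := hδ _ huk1 _ huk hdist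
        rwa [Real.dist_eq] at this
      set a := |σ (u (k+1)) - σ (u k)| with ha
      have ha0 : 0 ≤ a := abs_nonneg _
      have h2 : (σ (u (k+1)) - σ (u k)) ^ 2 = a ^ ((2 - p) + p) := by
        rw [show (2 - p) + p = ((2:ℕ):ℝ) by push_cast; ring, Real.rpow_natCast, ha, sq_abs]
      rw [h2, Real.rpow_add' ha0 (by norm_num)]
      exact mul_le_mul_of_nonneg_right
        (Real.rpow_le_rpow ha0 haη.le (by linarith)) (Real.rpow_nonneg ha0 p)
    have hsum_le : (∑ k ∈ Finset.range n, (σ (u (k+1)) - σ (u k)) ^ 2)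
        ≤ η ^ (2 - p) * ∑ k ∈ Finset.range n, |σ (u (k+1)) - σ (u k)| ^ p := by
      rw [Finset.mul_sum]
      exact Finset.sum_le_sum fun k hk => hterm k (Finset.mem_range.mp hk)
    have hmemS : (∑ k ∈ Finset.range n, |σ (u (k+1)) - σ (u k)| ^ p)
        ∈ pVarSumsReal p σ 0 T := ⟨n, u, hn, h0, hnT, hmono, rfl⟩
    have hpS : (∑ k ∈ Finset.range n, |σ (u (k+1)) - σ (u k)| ^ p) ≤ S :=
      le_csSup hBdd hmemS
    have hη2p : 0 ≤ η ^ (2 - p) := Real.rpow_nonneg hη0.le _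
    have hfin : η ^ (2 - p) * (∑ k ∈ Finset.range n, |σ (u (k+1)) - σ (u k)| ^ p)
        ≤ (ε / (S + 1)) * S := by
      calc η ^ (2 - p) * (∑ k ∈ Finset.range n, |σ (u (k+1)) - σ (u k)| ^ p)
          ≤ η ^ (2 - p) * S := mul_le_mul_of_nonneg_left hpS hη2p
        _ ≤ (ε / (S + 1)) * S := mul_le_mul_of_nonneg_right hηp hS0
    have hfrac : (ε / (S + 1)) * S < ε := by
      rw [div_mul_eq_mul_div, div_lt_iff₀ (by linarith)]
      nlinarith
    linarith [le_trans hsum_le hfin]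
  · -- the error bound
    intro s t hs hst htT
    have hBsub : BddAbove (pVarSumsReal p σ s t) := pvar_bdd_sub hs hst htT hBdd
    have hmem := pvar_single (p := p) σ hst
    have hle : |σ t - σ s| ^ p ≤ sSup (pVarSumsReal p σ s t) := le_csSup hBsub hmem
    have hSnn : 0 ≤ sSup (pVarSumsReal p σ s t) :=
      le_trans (Real.rpow_nonneg (abs_nonneg _) p) hle
    have h1 : (σ t ^ 2 - σ s ^ 2) / 2 - σ s * (σ t - σ s) = (σ t - σ s) ^ 2 / 2 := by ring
    rw [h1]
    have h2 : (|σ t - σ s| ^ p) ^ (2 / p) = (σ t - σ s) ^ 2 := by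
      rw [← Real.rpow_mul (abs_nonneg _), show p * (2 / p) = (2:ℝ) from by
        field_simp, show ((2:ℝ)) = ((2:ℕ):ℝ) from by norm_num, Real.rpow_natCast, sq_abs]
    have h3 : (σ t - σ s) ^ 2 ≤ sSup (pVarSumsReal p σ s t) ^ (2 / p) := by
      rw [← h2]
      exact Real.rpow_le_rpow (Real.rpow_nonneg (abs_nonneg _) p) hle
        (div_nonneg (by norm_num) (le_of_lt hp0))
    rw [abs_of_nonneg (by positivity)]
    nlinarith [sq_nonneg (σ t - σ s)]
end
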